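/- arXiv:1501.02952 — 2 statements merged into one kernel-verified Lean document; each statement's English description precedes it below -/
import Mathlib

section
/- With σ : (0,b] → [0,∞) the inverse of the restriction of η to [0,∞), one has lim_{t→b⁻} |η'(σ(t))|/√(b − t) = √(8bθ₀(π−θ₀)/3); in particular this limit exists and is a nonzero constant. -/
open Real Filter Topology Set

/-- The symbol `η(s) = sinh(s(π−2θ₀))/(2 sinh(sπ))` for `s ≠ 0`, with `η(0) = b = 1/2 − θ₀/π`. -/
noncomputable def eta (θ₀ : ℝ) (s : ℝ) : ℝ :=
  if s = 0 then 1 / 2 - θ₀ / π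
  else Real.sinh (s * (π - 2 * θ₀)) / (2 * Real.sinh (s * π))

lemma exp_taylor4 {x : ℝ} (hx : |x| ≤ 1) :
    |Real.exp x - (1 + x + x^2/2 + x^3/6)| ≤ |x|^4 * (5/96) := by
  have h1 := Real.exp_bound hx (n := 4) (by norm_num)
  rw [Finset.sum_range_succ, Finset.sum_range_succ, Finset.sum_range_succ,
    Finset.sum_range_succ, Finset.sum_range_zero] at h1
  convert h1 using 2 <;> norm_num [Nat.factorial]

lemma sinh_taylor {x : ℝ} (hx : |x| ≤ 1) : |Real.sinh x - (x + x^3/6)| ≤ |x|^4 := by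
  have hA := exp_taylor4 hx
  have hx' : |(-x)| ≤ 1 := by rwa [abs_neg]
  have hB := exp_taylor4 hx'
  rw [abs_neg] at hB
  rw [Real.sinh_eq]
  have heq : (Real.exp x - Real.exp (-x)) / 2 - (x + x^3/6)
      = ((Real.exp x - (1 + x + x^2/2 + x^3/6)) - (Real.exp (-x) - (1 + (-x) + (-x)^2/2 + (-x)^3/6)))/2 := by
    ring
  rw [heq]
  calc |((Real.exp x - (1 + x + x^2/2 + x^3/6)) - (Real.exp (-x) - (1 + (-x) + (-x)^2/2 + (-x)^3/6)))/2|
      ≤ (|Real.exp x - (1 + x + x^2/2 + x^3/6)| + |Real.exp (-x) - (1 + (-x) + (-x)^2/2 + (-x)^3/6)|)/2 := by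
        rw [abs_div, abs_two]; gcongr; exact abs_sub _ _
    _ ≤ (|x|^4 * (5/96) + |x|^4 * (5/96))/2 := by gcongr
    _ ≤ |x|^4 := by nlinarith [pow_nonneg (abs_nonneg x) 4]

lemma tendsto_G (u v : ℝ) :
    Tendsto (fun s : ℝ => (v * Real.sinh (u*s) - u * Real.sinh (v*s))/s^3) (𝓝[>] 0)
      (𝓝 (u * v * (u^2 - v^2) / 6)) := by
  set L := u * v * (u^2 - v^2) / 6 with hL
  have key : ∀ᶠ s in 𝓝[>] (0:ℝ),
      ‖(v * Real.sinh (u*s) - u * Real.sinh (v*s))/s^3 - L‖ ≤ (|v| * u^4 + |u| * v^4) * s := by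
    have hmem : Ioo (0:ℝ) (1/(|u| + |v| + 1)) ∈ 𝓝[>] (0:ℝ) :=
      Ioo_mem_nhdsGT_of_mem ⟨le_refl _, by positivity⟩
    filter_upwards [hmem] with s hs
    obtain ⟨hs0, hs1⟩ := hs
    have habs : (|u| + |v| + 1) * s < 1 := by
      rw [lt_div_iff₀ (by positivity)] at hs1; linarith [hs1]
    have hsu : |u * s| ≤ 1 := by
      rw [abs_mul, abs_of_pos hs0]
      nlinarith [abs_nonneg v, abs_nonneg u]
    have hsv : |v * s| ≤ 1 := by
      rw [abs_mul, abs_of_pos hs0]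
      nlinarith [abs_nonneg v, abs_nonneg u]
    have hu := sinh_taylor hsu
    have hv := sinh_taylor hsv
    have hs3 : (0:ℝ) < s^3 := by positivity
    have heq : (v * Real.sinh (u*s) - u * Real.sinh (v*s))/s^3 - L
        = (v * (Real.sinh (u*s) - (u*s + (u*s)^3/6)) - u * (Real.sinh (v*s) - (v*s + (v*s)^3/6)))/s^3 := by
      field_simp
      ring
    rw [heq, Real.norm_eq_abs, abs_div, abs_of_pos hs3, div_le_iff₀ hs3]
    have h4u : |u|^4 = u^4 := by rw [← abs_pow]; exact abs_of_nonneg (by positivity)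
    have h4v : |v|^4 = v^4 := by rw [← abs_pow]; exact abs_of_nonneg (by positivity)
    calc |v * (Real.sinh (u*s) - (u*s + (u*s)^3/6)) - u * (Real.sinh (v*s) - (v*s + (v*s)^3/6))|
        ≤ |v| * |Real.sinh (u*s) - (u*s + (u*s)^3/6)| + |u| * |Real.sinh (v*s) - (v*s + (v*s)^3/6)| := by
          rw [← abs_mul, ← abs_mul]; exact abs_sub _ _
      _ ≤ |v| * |u*s|^4 + |u| * |v*s|^4 := by gcongr
      _ = |v| * (|u|^4 * s^4) + |u| * (|v|^4 * s^4) := by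
          rw [abs_mul, abs_mul, abs_of_pos hs0]; ring
      _ = (|v| * u^4 + |u| * v^4) * s * s^3 := by rw [h4u, h4v]; ring
  have hz : Tendsto (fun s : ℝ => (|v| * u^4 + |u| * v^4) * s) (𝓝[>] 0) (𝓝 0) := by
    have h := (tendsto_id.const_mul (|v| * u^4 + |u| * v^4) :
      Tendsto (fun s : ℝ => (|v| * u^4 + |u| * v^4) * s) (𝓝 0) (𝓝 ((|v| * u^4 + |u| * v^4) * 0)))
    rw [mul_zero] at h
    exact h.mono_left nhdsWithin_le_nhds
  have h0 := squeeze_zero_norm' key hz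
  have h2 : Tendsto (fun s : ℝ => ((v * Real.sinh (u*s) - u * Real.sinh (v*s))/s^3 - L) + L)
      (𝓝[>] 0) (𝓝 (0 + L)) := h0.add tendsto_const_nhds
  simpa using h2

lemma tendsto_sinh_slope : Tendsto (fun s : ℝ => Real.sinh (π*s)/s) (𝓝[>] 0) (𝓝 π) := by
  have h : HasDerivAt (fun s : ℝ => Real.sinh (π*s)) π 0 := by
    have h1 : HasDerivAt (fun s : ℝ => π * s) π 0 := by
      simpa using (hasDerivAt_id (0:ℝ)).const_mul π
    have := (Real.hasDerivAt_sinh (π*0)).comp 0 h1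
    simpa [Function.comp_def] using this
  rw [hasDerivAt_iff_tendsto_slope] at h
  have h2 : Tendsto (fun s : ℝ => Real.sinh (π*s)/s) (𝓝[≠] 0) (𝓝 π) :=
    h.congr (fun s => by simp [slope_def_field, div_eq_div_iff])
  exact h2.mono_left (nhdsWithin_mono _ (fun s hs => ne_of_gt hs))

lemma sinh_lt_mul_cosh {x : ℝ} (hx : 0 < x) : Real.sinh x < x * Real.cosh x := by
  have hmono : StrictMonoOn (fun y : ℝ => y * Real.cosh y - Real.sinh y) (Ici 0) := by
    apply strictMonoOn_of_deriv_pos (convex_Ici 0)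
    · exact (continuous_id.mul Real.continuous_cosh |>.sub Real.continuous_sinh).continuousOn
    · intro y hy
      rw [interior_Ici] at hy
      have hd : HasDerivAt (fun y : ℝ => y * Real.cosh y - Real.sinh y) (y * Real.sinh y) y := by
        have := ((hasDerivAt_id y).mul (Real.hasDerivAt_cosh y)).sub (Real.hasDerivAt_sinh y)
        exact this.congr_deriv (by simp)
      rw [hd.deriv]
      exact mul_pos hy (Real.sinh_pos_iff.mpr hy)
  have := hmono (self_mem_Ici) (mem_Ici.mpr hx.le) hx
  simpa using this

lemma sinh_div_mono {u v : ℝ} (hu : 0 < u) (huv : u < v) :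
    v * Real.sinh u < u * Real.sinh v := by
  have hmono : StrictMonoOn (fun y : ℝ => Real.sinh y / y) (Ioi 0) := by
    apply strictMonoOn_of_deriv_pos (convex_Ioi 0)
    · apply ContinuousOn.div Real.continuous_sinh.continuousOn continuousOn_id
      intro y hy; exact ne_of_gt hy
    · intro y hy
      rw [interior_Ioi] at hy
      have hy0 : (y:ℝ) ≠ 0 := ne_of_gt hy
      have hd : HasDerivAt (fun y : ℝ => Real.sinh y / y)
          ((Real.cosh y * y - Real.sinh y * 1) / y^2) y :=
        (Real.hasDerivAt_sinh y).div (hasDerivAt_id y) hy0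
      rw [hd.deriv]
      apply div_pos _ (by positivity)
      have := sinh_lt_mul_cosh hy
      nlinarith
  have h := hmono (mem_Ioi.mpr hu) (mem_Ioi.mpr (hu.trans huv)) huv
  rw [div_lt_div_iff₀ hu (hu.trans huv)] at h
  linarith

lemma eta_hasDeriv (θ₀ : ℝ) {s : ℝ} (hs : 0 < s) :
    HasDerivAt (eta θ₀)
      (((π + (π - 2*θ₀)) * Real.sinh ((π - (π - 2*θ₀))*s)
        - (π - (π - 2*θ₀)) * Real.sinh ((π + (π - 2*θ₀))*s)) / 2
        / (2 * (Real.sinh (s*π))^2)) s := by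
  set a := π - 2*θ₀ with ha
  have hS : Real.sinh (s*π) > 0 := Real.sinh_pos_iff.mpr (by positivity)
  have hnum : HasDerivAt (fun x : ℝ => Real.sinh (x*a)) (a * Real.cosh (s*a)) s := by
    have h1 : HasDerivAt (fun x : ℝ => x*a) a s := by simpa using (hasDerivAt_id s).mul_const a
    simpa [Function.comp_def, mul_comm] using (Real.hasDerivAt_sinh (s*a)).comp s h1
  have hden : HasDerivAt (fun x : ℝ => 2 * Real.sinh (x*π)) (2 * (π * Real.cosh (s*π))) s := by
    have h1 : HasDerivAt (fun x : ℝ => x*π) π s := by simpa using (hasDerivAt_id s).mul_const π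
    have h2 := (Real.hasDerivAt_sinh (s*π)).comp s h1
    simpa [Function.comp, mul_comm] using h2.const_mul 2
  have hdiv := hnum.div hden (by positivity)
  have heq : eta θ₀ =ᶠ[𝓝 s] fun x => Real.sinh (x*a) / (2 * Real.sinh (x*π)) := by
    filter_upwards [eventually_ne_nhds (ne_of_gt hs)] with x hx
    simp [eta, hx, ha]
  refine HasDerivAt.congr_of_eventuallyEq ?_ heq
  refine hdiv.congr_deriv ?_
  have h2S : (2 * Real.sinh (s*π)) ≠ 0 := by positivity
  rw [show (π - a)*s = π*s - a*s by ring, show (π + a)*s = π*s + a*s by ring,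
    Real.sinh_sub, Real.sinh_add, mul_comm s a, mul_comm s π]
  field_simp
  ring

/-- with `σ` the inverse on `(0,b]` of the restriction of `η` to `[0,∞)`,
`lim_{t→b⁻} |η'(σ(t))|/√(b−t) = √(8bθ₀(π−θ₀)/3)`, a nonzero constant
(`b = 1/2 − θ₀/π`). -/
theorem statement8 (θ₀ : ℝ) (h0 : 0 < θ₀) (h1 : θ₀ < π / 2) (σ : ℝ → ℝ)
    (hσ : ∀ t : ℝ, 0 < t → t ≤ 1 / 2 - θ₀ / π → 0 ≤ σ t ∧ eta θ₀ (σ t) = t) :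
    Real.sqrt (8 * (1 / 2 - θ₀ / π) * θ₀ * (π - θ₀) / 3) ≠ 0 ∧
    Tendsto (fun t : ℝ => |deriv (eta θ₀) (σ t)| / Real.sqrt ((1 / 2 - θ₀ / π) - t))
      (𝓝[<] (1 / 2 - θ₀ / π))
      (𝓝 (Real.sqrt (8 * (1 / 2 - θ₀ / π) * θ₀ * (π - θ₀) / 3))) := by
  have hπ : (0:ℝ) < π := Real.pi_pos
  set b : ℝ := 1 / 2 - θ₀ / π with hbdef
  set a : ℝ := π - 2*θ₀ with hadef
  clear_value b a
  have ha0 : 0 < a := by rw [hadef]; linarith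
  have haπ : a < π := by rw [hadef]; linarith
  have hba : b = a / (2*π) := by rw [hbdef, hadef]; field_simp
  have hb0 : 0 < b := by rw [hba]; positivity
  -- η(s) < b for s > 0
  have hlt : ∀ s : ℝ, 0 < s → eta θ₀ s < b := by
    intro s hs
    have hK := sinh_div_mono (u := s*a) (v := s*π) (by positivity) (by nlinarith)
    have hS : Real.sinh (s*π) > 0 := Real.sinh_pos_iff.mpr (by positivity)
    rw [show eta θ₀ s = Real.sinh (s*a) / (2 * Real.sinh (s*π)) from by
      simp [eta, ne_of_gt hs, hadef], hba, div_lt_div_iff₀ (by positivity) (by positivity)]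
    nlinarith
  -- η strictly decreasing on (0,∞)
  have hanti : StrictAntiOn (eta θ₀) (Ioi 0) := by
    apply strictAntiOn_of_deriv_neg (convex_Ioi 0)
    · exact fun s hs => ((eta_hasDeriv θ₀ hs).continuousAt).continuousWithinAt
    · intro s hs
      rw [interior_Ioi] at hs
      have hs0 : (0:ℝ) < s := hs
      rw [(eta_hasDeriv θ₀ hs0).deriv]
      have hS : Real.sinh (s*π) > 0 := Real.sinh_pos_iff.mpr (by positivity)
      apply div_neg_of_neg_of_pos _ (by positivity)
      have hK := sinh_div_mono (u := (π - a)*s) (v := (π + a)*s)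
        (by nlinarith) (by nlinarith)
      rw [← hadef]
      have h2 : ((π + a) * Real.sinh ((π - a)*s)) * s < ((π - a) * Real.sinh ((π + a)*s)) * s := by
        linear_combination hK
      have h3 := (mul_lt_mul_iff_of_pos_right hs0).mp h2
      linarith
  -- σ tends to 0⁺
  have hIoo : Ioo (0:ℝ) b ∈ 𝓝[<] b := Ioo_mem_nhdsLT_of_mem ⟨hb0, le_refl b⟩
  have hσpos : ∀ t : ℝ, t ∈ Ioo (0:ℝ) b → 0 < σ t := by
    intro t ht
    rcases (hσ t ht.1 ht.2.le) with ⟨h0', heq⟩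
    rcases h0'.lt_or_eq with h | h
    · exact h
    · exfalso
      rw [← h] at heq
      rw [show eta θ₀ 0 = b from by simp [eta, hbdef]] at heq
      exact absurd heq (ne_of_gt ht.2)
  have htendσ : Tendsto σ (𝓝[<] b) (𝓝[>] 0) := by
    rw [tendsto_nhdsWithin_iff]
    constructor
    · rw [Metric.tendsto_nhds]
      intro ε hε
      have hδ : eta θ₀ ε < b := hlt ε hε
      have hmem : Ioo (max 0 (eta θ₀ ε)) b ∈ 𝓝[<] b :=
        Ioo_mem_nhdsLT_of_mem ⟨max_lt hb0 hδ, le_refl b⟩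
      filter_upwards [hmem] with t ht
      have ht0 : 0 < t := lt_of_le_of_lt (le_max_left _ _) ht.1
      have htb : t < b := ht.2
      rcases hσ t ht0 htb.le with ⟨-, heq⟩
      have hσt : 0 < σ t := hσpos t ⟨ht0, htb⟩
      have hσε : σ t < ε := by
        by_contra hcon
        push_neg at hcon
        have : eta θ₀ (σ t) ≤ eta θ₀ ε :=
          hanti.antitoneOn (mem_Ioi.mpr hε) (mem_Ioi.mpr hσt) hcon
        rw [heq] at this
        exact absurd (lt_of_le_of_lt (le_max_right 0 (eta θ₀ ε)) ht.1) (not_lt.mpr this)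
      rw [Real.dist_eq, sub_zero, abs_of_pos hσt]
      exact hσε
    · filter_upwards [hIoo] with t ht using hσpos t ht
  -- the limit of Q(s) = (η'(s))²/(b − η(s)) as s → 0⁺
  have hG1 := tendsto_G (π - a) (π + a)
  have hG2 := tendsto_G π a
  have hG3 := tendsto_sinh_slope
  have hQ : Tendsto (fun s : ℝ => (deriv (eta θ₀) s)^2 / (b - eta θ₀ s)) (𝓝[>] 0)
      (𝓝 (8 * b * θ₀ * (π - θ₀) / 3)) := by
    have hΦ : Tendsto (fun s : ℝ =>
        π * ((((π + a) * Real.sinh ((π - a)*s) - (π - a) * Real.sinh ((π + a)*s))/s^3)/2)^2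
        / (2 * (Real.sinh (π*s)/s)^3 * ((a * Real.sinh (π*s) - π * Real.sinh (a*s))/s^3)))
        (𝓝[>] 0)
        (𝓝 (π * (((π - a) * (π + a) * ((π - a)^2 - (π + a)^2) / 6)/2)^2
          / (2 * π^3 * (π * a * (π^2 - a^2) / 6)))) := by
      apply Tendsto.div
      · exact (tendsto_const_nhds.mul ((hG1.div_const 2).pow 2))
      · exact (tendsto_const_nhds.mul (hG3.pow 3)).mul hG2
      · have hπa2 : (0:ℝ) < π^2 - a^2 := by nlinarith
        have hX : (0:ℝ) < π * a * (π^2 - a^2) / 6 := by positivity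
        exact ne_of_gt (mul_pos (by positivity) hX)
    have hconst : π * (((π - a) * (π + a) * ((π - a)^2 - (π + a)^2) / 6)/2)^2
          / (2 * π^3 * (π * a * (π^2 - a^2) / 6)) = 8 * b * θ₀ * (π - θ₀) / 3 := by
      have hne : π ≠ 0 := ne_of_gt hπ
      have hπa2 : (0:ℝ) < π^2 - a^2 := by nlinarith
      have hB : (2 * π^3 * (π * a * (π^2 - a^2) / 6)) ≠ 0 := by
        have hX : (0:ℝ) < π * a * (π^2 - a^2) / 6 := by positivity
        exact ne_of_gt (mul_pos (by positivity) hX)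
      rw [div_eq_div_iff hB (by norm_num : (3:ℝ) ≠ 0), hba, hadef]
      field_simp
      ring
    rw [← hconst]
    apply hΦ.congr'
    filter_upwards [self_mem_nhdsWithin] with s hs
    have hs : (0:ℝ) < s := hs
    have hS : Real.sinh (s*π) > 0 := Real.sinh_pos_iff.mpr (by positivity)
    have hS' : Real.sinh (π*s) > 0 := by rwa [mul_comm]
    have hD : π * Real.sinh (s*a) < a * Real.sinh (s*π) := by
      have hK := sinh_div_mono (u := s*a) (v := s*π) (by positivity) (by nlinarith)
      nlinarith
    have hderiv : deriv (eta θ₀) s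
        = (((π + a) * Real.sinh ((π - a)*s) - (π - a) * Real.sinh ((π + a)*s)) / 2)
          / (2 * (Real.sinh (s*π))^2) := by
      rw [(eta_hasDeriv θ₀ hs).deriv, ← hadef]
    have hbeta : b - eta θ₀ s
        = (a * Real.sinh (π*s) - π * Real.sinh (a*s)) / (2*π*Real.sinh (π*s)) := by
      rw [show eta θ₀ s = Real.sinh (s*a) / (2 * Real.sinh (s*π)) from by
        simp [eta, ne_of_gt hs, hadef], hba, mul_comm π s, mul_comm a s]
      field_simp
    rw [hderiv, hbeta, mul_comm s π]
    have hDpos : 0 < a * Real.sinh (π*s) - π * Real.sinh (a*s) := by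
      rw [mul_comm π s, mul_comm a s]; linarith
    field_simp
  -- positive constant
  have hcpos : 0 < 8 * b * θ₀ * (π - θ₀) / 3 := by
    have : θ₀ < π := by linarith
    have h8 : 0 < π - θ₀ := by linarith
    positivity
  constructor
  · exact ne_of_gt (Real.sqrt_pos.mpr hcpos)
  · -- F(s) = |η'(s)|/√(b−η(s)) tends to √(8bθ₀(π−θ₀)/3)
    have hF : Tendsto (fun s : ℝ => |deriv (eta θ₀) s| / Real.sqrt (b - eta θ₀ s)) (𝓝[>] 0)
        (𝓝 (Real.sqrt (8 * b * θ₀ * (π - θ₀) / 3))) := by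
      have hsq := (Real.continuous_sqrt.continuousAt (x := 8 * b * θ₀ * (π - θ₀) / 3)).tendsto.comp hQ
      apply hsq.congr'
      filter_upwards [self_mem_nhdsWithin] with s hs
      have hs : (0:ℝ) < s := hs
      simp only [Function.comp_apply]
      rw [Real.sqrt_div (sq_nonneg _), Real.sqrt_sq_eq_abs]
    have hcomp := hF.comp htendσ
    apply hcomp.congr'
    filter_upwards [hIoo] with t ht
    rcases hσ t ht.1 ht.2.le with ⟨-, heq⟩
    simp only [Function.comp_apply, heq]
end

section
/- Spectral resolution of 𝕂*: for every f ∈ W*, the function F : ℝ → ℝ defined by F(t) = ⟨f, E_{min(max(t,−b),b)} f⟩_{W*} is real-valued, nondecreasing and right-continuous, with F ≡ 0 on (−∞, −b] and F ≡ ‖f‖²_{W*} on [b, ∞); moreover its Lebesgue–Stieltjes measure μ_F satisfies ∫_ℝ t dμ_F(t) = ⟨f, 𝕂*f⟩_{W*} (and μ_F(ℝ) = ‖f‖²_{W*}). -/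
open Real Filter Topology Set MeasureTheory

/-- The weight `p₁`. -/
noncomputable def p1 (θ₀ : ℝ) (s : ℝ) : ℝ :=
  if s = 0 then θ₀ * (π - θ₀) / π
  else Real.sinh (s * θ₀) * Real.sinh (s * (π - θ₀)) / (s * Real.sinh (s * π))

/-- The weight `p₂`. -/
noncomputable def p2 (θ₀ : ℝ) (s : ℝ) : ℝ :=
  Real.cosh (s * θ₀) * Real.cosh (s * (π - θ₀)) / (s * Real.sinh (s * π))

/-- The measure `p₁(s) ds`. -/
noncomputable def mu1 (θ₀ : ℝ) : Measure ℝ :=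
  (volume : Measure ℝ).withDensity fun s => ENNReal.ofReal (p1 θ₀ s)

/-- The measure `p₂(s) ds`. -/
noncomputable def mu2 (θ₀ : ℝ) : Measure ℝ :=
  (volume : Measure ℝ).withDensity fun s => ENNReal.ofReal (p2 θ₀ s)

/-- `sinh y < y * cosh y` for `y > 0`. -/
lemma aux_sinh_lt_mul_cosh {y : ℝ} (hy : 0 < y) : Real.sinh y < y * Real.cosh y := by
  have key : StrictMonoOn (fun y : ℝ => y * Real.cosh y - Real.sinh y) (Ici 0) := by
    apply strictMonoOn_of_deriv_pos (convex_Ici 0)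
    · exact ((continuous_id.mul Real.continuous_cosh).sub Real.continuous_sinh).continuousOn
    · intro x hx
      rw [interior_Ici, mem_Ioi] at hx
      have h1 : HasDerivAt (fun y : ℝ => y * Real.cosh y - Real.sinh y)
          (1 * Real.cosh x + x * Real.sinh x - Real.cosh x) x := by
        exact ((hasDerivAt_id x).mul (Real.hasDerivAt_cosh x)).sub (Real.hasDerivAt_sinh x)
      rw [h1.deriv]
      have := Real.sinh_pos_iff.2 hx
      nlinarith
  have := key (le_refl (0:ℝ)) (le_of_lt hy) hy
  simp at this
  linarith

/-- `c ↦ c * cosh (c*x) / sinh (c*x)` is strictly monotone on `Ioi 0` for `x > 0`: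
key inequality form. -/
lemma aux_coth_ineq {x a b : ℝ} (hx : 0 < x) (ha : 0 < a) (hab : a < b) :
    a * Real.cosh (a * x) * Real.sinh (b * x) < b * Real.sinh (a * x) * Real.cosh (b * x) := by
  have hb : 0 < b := ha.trans hab
  have key : StrictMonoOn (fun c : ℝ => c * Real.cosh (c * x) / Real.sinh (c * x)) (Ioi 0) := by
    apply strictMonoOn_of_deriv_pos (convex_Ioi 0)
    · apply ContinuousOn.div
      · exact (continuous_id.mul (Real.continuous_cosh.comp (continuous_id.mul
          continuous_const))).continuousOn
      · exact (Real.continuous_sinh.comp (continuous_id.mul continuous_const)).continuousOn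
      · intro c hc
        exact Real.sinh_ne_zero.2 (ne_of_gt (mul_pos hc hx))
    · intro c hc
      rw [interior_Ioi, mem_Ioi] at hc
      have hcx : 0 < c * x := mul_pos hc hx
      have hs : Real.sinh (c * x) ≠ 0 := Real.sinh_ne_zero.2 (ne_of_gt hcx)
      have hcx' : HasDerivAt (fun c : ℝ => c * x) x c := by
        simpa using (hasDerivAt_id c).mul_const x
      have hnum : HasDerivAt (fun c : ℝ => c * Real.cosh (c * x))
          (1 * Real.cosh (c * x) + c * (Real.sinh (c * x) * x)) c :=
        (hasDerivAt_id c).mul (by have := (Real.hasDerivAt_cosh (c * x)).comp c hcx'; exact this)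
      have hden : HasDerivAt (fun c : ℝ => Real.sinh (c * x))
          (Real.cosh (c * x) * x) c := by have := (Real.hasDerivAt_sinh (c * x)).comp c hcx'; exact this
      have hdiv := hnum.div hden hs
      rw [show deriv (fun c : ℝ => c * Real.cosh (c * x) / Real.sinh (c * x)) c = _ from hdiv.deriv]
      apply div_pos
      · have hcosh := Real.cosh_pos (x := c * x)
        have hsinh := Real.sinh_pos_iff.2 hcx
        have hid : Real.cosh (c*x)^2 - Real.sinh (c*x)^2 = 1 := Real.cosh_sq_sub_sinh_sq _
        have hgt : c * x < Real.sinh (c * x) * Real.cosh (c * x) := by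
          have h2 : 2 * (c * x) < Real.sinh (2 * (c * x)) :=
            Real.self_lt_sinh_iff.2 (by linarith)
          rw [Real.sinh_two_mul] at h2
          linarith
        ring_nf
        nlinarith
      · exact pow_pos (Real.sinh_pos_iff.2 hcx) 2
  have h2 := key (mem_Ioi.2 ha) (mem_Ioi.2 hb) hab
  simp only at h2
  have hsa : 0 < Real.sinh (a * x) := Real.sinh_pos_iff.2 (mul_pos ha hx)
  have hsb : 0 < Real.sinh (b * x) := Real.sinh_pos_iff.2 (mul_pos hb hx)
  rw [div_lt_div_iff₀ hsa hsb] at h2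
  linarith

/-- `sinh (a*t)/a < sinh (b*t)/b` for `0 < a < b`, `t > 0`. -/
lemma aux_sinh_div_lt {t a b : ℝ} (ht : 0 < t) (ha : 0 < a) (hab : a < b) :
    b * Real.sinh (a * t) < a * Real.sinh (b * t) := by
  have hb : 0 < b := ha.trans hab
  have key : StrictMonoOn (fun c : ℝ => Real.sinh (c * t) / c) (Ioi 0) := by
    apply strictMonoOn_of_deriv_pos (convex_Ioi 0)
    · apply ContinuousOn.div
      · exact (Real.continuous_sinh.comp (continuous_id.mul continuous_const)).continuousOn
      · exact continuous_id.continuousOn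
      · intro c hc; exact ne_of_gt hc
    · intro c hc
      rw [interior_Ioi, mem_Ioi] at hc
      have hct : 0 < c * t := mul_pos hc ht
      have hct' : HasDerivAt (fun c : ℝ => c * t) t c := by
        simpa using (hasDerivAt_id c).mul_const t
      have hnum : HasDerivAt (fun c : ℝ => Real.sinh (c * t))
          (Real.cosh (c * t) * t) c := by have := (Real.hasDerivAt_sinh (c * t)).comp c hct'; exact this
      have hdiv := hnum.div (hasDerivAt_id c) (ne_of_gt hc)
      simp only [id] at hdiv
      rw [show deriv (fun c : ℝ => Real.sinh (c * t) / c) c = _ from hdiv.deriv]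
      apply div_pos
      · have := aux_sinh_lt_mul_cosh hct
        ring_nf
        nlinarith
      · exact pow_pos hc 2
  have h2 := key (mem_Ioi.2 ha) (mem_Ioi.2 hb) hab
  simp only at h2
  rw [div_lt_div_iff₀ ha hb] at h2
  linarith

section
variable {θ₀ : ℝ}

lemma b_pos (h1 : θ₀ < π / 2) : 0 < 1 / 2 - θ₀ / π := by
  have hπ : 0 < π := Real.pi_pos
  rw [sub_pos, div_lt_iff₀ hπ]
  linarith

lemma aa_pos (h1 : θ₀ < π / 2) : 0 < π - 2 * θ₀ := by linarith [Real.pi_pos]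

lemma aa_lt_pi (h0 : 0 < θ₀) : π - 2 * θ₀ < π := by linarith

lemma eta_zero : eta θ₀ 0 = 1 / 2 - θ₀ / π := if_pos rfl

lemma eta_even (s : ℝ) : eta θ₀ (-s) = eta θ₀ s := by
  unfold eta
  rcases eq_or_ne s 0 with h | h
  · simp [h]
  · rw [if_neg (neg_ne_zero.2 h), if_neg h]
    rw [neg_mul, neg_mul, Real.sinh_neg, Real.sinh_neg]
    rw [mul_neg, neg_div_neg_eq]

lemma eta_pos (h0 : 0 < θ₀) (h1 : θ₀ < π / 2) (s : ℝ) : 0 < eta θ₀ s := by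
  unfold eta
  rcases eq_or_ne s 0 with h | h
  · rw [if_pos h]; exact b_pos h1
  · rw [if_neg h]
    rcases lt_or_gt_of_ne h with hneg | hpos
    · apply div_pos_of_neg_of_neg
      · exact Real.sinh_neg_iff.2 (mul_neg_of_neg_of_pos hneg (aa_pos h1))
      · have := Real.sinh_neg_iff.2 (mul_neg_of_neg_of_pos hneg Real.pi_pos)
        linarith
    · apply div_pos
      · exact Real.sinh_pos_iff.2 (mul_pos hpos (aa_pos h1))
      · have := Real.sinh_pos_iff.2 (mul_pos hpos Real.pi_pos)
        linarith

lemma eta_strictAntiOn (h0 : 0 < θ₀) (h1 : θ₀ < π / 2) : StrictAntiOn (eta θ₀) (Ici 0) := by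
  have hπ : 0 < π := Real.pi_pos
  have haa : 0 < π - 2 * θ₀ := aa_pos h1
  have haπ : π - 2 * θ₀ < π := aa_lt_pi h0
  have key : StrictAntiOn (eta θ₀) (Ioi 0) := by
    have heq : EqOn (fun s : ℝ => Real.sinh (s * (π - 2 * θ₀)) / (2 * Real.sinh (s * π)))
        (eta θ₀) (Ioi 0) := by
      intro s hs
      simp only [eta, if_neg (ne_of_gt (mem_Ioi.1 hs))]
    apply StrictAntiOn.congr _ heq
    apply strictAntiOn_of_deriv_neg (convex_Ioi 0)
    · apply ContinuousOn.div
      · exact (Real.continuous_sinh.comp (continuous_id.mul continuous_const)).continuousOn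
      · exact (continuous_const.mul
          (Real.continuous_sinh.comp (continuous_id.mul continuous_const))).continuousOn
      · intro s hs
        have : (0:ℝ) < Real.sinh (s * π) := Real.sinh_pos_iff.2 (mul_pos (mem_Ioi.1 hs) hπ)
        positivity
    · intro s hs
      rw [interior_Ioi, mem_Ioi] at hs
      have hsπ : 0 < Real.sinh (s * π) := Real.sinh_pos_iff.2 (mul_pos hs hπ)
      have hv : (2 : ℝ) * Real.sinh (s * π) ≠ 0 := by positivity
      have hd1 : HasDerivAt (fun s : ℝ => s * (π - 2 * θ₀)) (π - 2 * θ₀) s := by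
        simpa using (hasDerivAt_id s).mul_const (π - 2 * θ₀)
      have hd2 : HasDerivAt (fun s : ℝ => s * π) π s := by
        simpa using (hasDerivAt_id s).mul_const π
      have hnum : HasDerivAt (fun s : ℝ => Real.sinh (s * (π - 2 * θ₀)))
          (Real.cosh (s * (π - 2 * θ₀)) * (π - 2 * θ₀)) s :=
        (Real.hasDerivAt_sinh _).comp s hd1
      have hden : HasDerivAt (fun s : ℝ => 2 * Real.sinh (s * π))
          (2 * (Real.cosh (s * π) * π)) s :=
        ((Real.hasDerivAt_sinh _).comp s hd2).const_mul 2
      have hdiv := hnum.div hden hv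
      rw [show deriv (fun s : ℝ => Real.sinh (s * (π - 2 * θ₀)) / (2 * Real.sinh (s * π))) s = _
        from hdiv.deriv]
      apply div_neg_of_neg_of_pos
      · have h := aux_coth_ineq hs haa haπ
        rw [mul_comm (π - 2*θ₀) s, mul_comm π s] at h
        nlinarith
      · positivity
  intro s hs t ht hst
  rcases eq_or_lt_of_le (mem_Ici.1 hs) with h | h
  · subst h
    have ht' : 0 < t := hst
    have hsπ : 0 < Real.sinh (t * π) := Real.sinh_pos_iff.2 (mul_pos ht' hπ)
    have key0 := aux_sinh_div_lt ht' haa haπ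
    rw [mul_comm (π - 2*θ₀) t, mul_comm π t] at key0
    rw [show eta θ₀ 0 = 1/2 - θ₀/π from if_pos rfl,
      show eta θ₀ t = Real.sinh (t * (π - 2 * θ₀)) / (2 * Real.sinh (t * π)) from
        if_neg (ne_of_gt ht')]
    have hb : 1/2 - θ₀/π = (π - 2*θ₀)/(2*π) := by
      field_simp
    rw [hb, div_lt_div_iff₀ (by positivity) (by positivity)]
    nlinarith
  · exact key h (mem_Ioi.2 (h.trans hst)) hst

end

section
variable {θ₀ : ℝ} (h0 : 0 < θ₀) (h1 : θ₀ < π / 2)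

include h0 h1

lemma eta_anti : AntitoneOn (eta θ₀) (Ici 0) := (eta_strictAntiOn h0 h1).antitoneOn

lemma eta_le_b (s : ℝ) : eta θ₀ s ≤ 1 / 2 - θ₀ / π := by
  rcases le_or_gt 0 s with h | h
  · rw [← eta_zero (θ₀ := θ₀)]
    exact eta_anti h0 h1 self_mem_Ici (mem_Ici.2 h) h
  · rw [← eta_even, ← eta_zero (θ₀ := θ₀)]
    exact eta_anti h0 h1 self_mem_Ici (mem_Ici.2 (by linarith)) (by linarith)

lemma eta_lt_iff {c d : ℝ} (hc : 0 ≤ c) (hd : 0 ≤ d) :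
    eta θ₀ c < eta θ₀ d ↔ d < c := by
  constructor
  · intro h
    by_contra hcd
    push_neg at hcd
    rcases eq_or_lt_of_le hcd with rfl | hlt
    · exact lt_irrefl _ h
    · exact absurd ((eta_strictAntiOn h0 h1) hc hd hlt) (not_lt.2 h.le)
  · intro h
    exact (eta_strictAntiOn h0 h1) hd hc h

lemma eta_le_iff {c d : ℝ} (hc : 0 ≤ c) (hd : 0 ≤ d) :
    eta θ₀ c ≤ eta θ₀ d ↔ d ≤ c := by
  rw [← not_lt, ← not_lt, not_iff_not]
  exact eta_lt_iff h0 h1 hd hc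

variable {σ : ℝ → ℝ}
  (hσ : ∀ t : ℝ, 0 < t → t ≤ 1 / 2 - θ₀ / π → 0 ≤ σ t ∧ eta θ₀ (σ t) = t)

include hσ

lemma sigma_eta' {c : ℝ} (hc : 0 ≤ c) : σ (eta θ₀ c) = c := by
  obtain ⟨h1', h2'⟩ := hσ (eta θ₀ c) (eta_pos h0 h1 c) (eta_le_b h0 h1 c)
  exact ((eta_strictAntiOn h0 h1).injOn h1' hc) h2'

lemma sigma_b' : σ (1 / 2 - θ₀ / π) = 0 := by
  rw [← eta_zero (θ₀ := θ₀)]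
  exact sigma_eta' h0 h1 hσ le_rfl

lemma sigma_pos' {u : ℝ} (hu1 : 0 < u) (hu2 : u < 1 / 2 - θ₀ / π) : 0 < σ u := by
  obtain ⟨hs1, hs2⟩ := hσ u hu1 hu2.le
  rcases eq_or_lt_of_le hs1 with h | h
  · exfalso
    rw [← h] at hs2
    rw [eta_zero (θ₀ := θ₀)] at hs2
    exact absurd hs2 (ne_of_lt hu2).symm
  · exact h

lemma sigma_anti' {u v : ℝ} (hu1 : 0 < u) (huv : u ≤ v) (hv2 : v ≤ 1 / 2 - θ₀ / π) :
    σ v ≤ σ u := by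
  obtain ⟨hu1', hu2'⟩ := hσ u hu1 (huv.trans hv2)
  obtain ⟨hv1', hv2'⟩ := hσ v (hu1.trans_le huv) hv2
  rw [← eta_le_iff h0 h1 hu1' hv1', hu2', hv2']
  exact huv

/-- The key set identity for the Fubini computation. -/
lemma set_identity {u : ℝ} (hu1 : 0 < u) (hu2 : u < 1 / 2 - θ₀ / π) :
    Ioc (-(σ u)) (σ u)
      = {s : ℝ | (0 ≤ s ∧ u ≤ eta θ₀ s) ∨ (s < 0 ∧ u < eta θ₀ (-s))} := by
  obtain ⟨hs1, hs2⟩ := hσ u hu1 hu2.le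
  have hspos : 0 < σ u := sigma_pos' h0 h1 hσ hu1 hu2
  ext s
  simp only [mem_Ioc, mem_setOf_eq]
  constructor
  · rintro ⟨hl, hr⟩
    rcases le_or_gt 0 s with hs | hs
    · left
      refine ⟨hs, ?_⟩
      rw [← hs2]
      exact eta_anti h0 h1 hs hs1 hr
    · right
      refine ⟨hs, ?_⟩
      rw [← hs2]
      exact (eta_lt_iff h0 h1 hs1 (by linarith : (0:ℝ) ≤ -s)).2 (by linarith)
  · rintro (⟨hs, he⟩ | ⟨hs, he⟩)
    · refine ⟨by linarith, ?_⟩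
      by_contra hlt
      push_neg at hlt
      have := (eta_lt_iff h0 h1 hs hs1).2 hlt
      rw [hs2] at this
      linarith
    · refine ⟨?_, by linarith⟩
      by_contra hle
      push_neg at hle
      have h2 : 0 ≤ -s := by linarith
      have : eta θ₀ (-s) ≤ eta θ₀ (σ u) := eta_anti h0 h1 hs1 h2 (by linarith)
      rw [hs2] at this
      linarith

end

lemma den_pos {s : ℝ} (hs : s ≠ 0) : 0 < s * Real.sinh (s * π) := by
  rcases lt_or_gt_of_ne hs with h | h
  · exact mul_pos_of_neg_of_neg h (Real.sinh_neg_iff.2 (mul_neg_of_neg_of_pos h Real.pi_pos))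
  · exact mul_pos h (Real.sinh_pos_iff.2 (mul_pos h Real.pi_pos))

lemma p1_pos {θ₀ : ℝ} (h0 : 0 < θ₀) (h1 : θ₀ < π / 2) (s : ℝ) : 0 < p1 θ₀ s := by
  have hπ := Real.pi_pos
  have hθπ : θ₀ < π := by linarith
  unfold p1
  rcases eq_or_ne s 0 with h | h
  · rw [if_pos h]
    apply div_pos (mul_pos h0 (by linarith)) hπ
  · rw [if_neg h]
    apply div_pos _ (den_pos h)
    rcases lt_or_gt_of_ne h with hn | hp
    · exact mul_pos_of_neg_of_neg (Real.sinh_neg_iff.2 (mul_neg_of_neg_of_pos hn h0))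
        (Real.sinh_neg_iff.2 (mul_neg_of_neg_of_pos hn (by linarith)))
    · exact mul_pos (Real.sinh_pos_iff.2 (mul_pos hp h0))
        (Real.sinh_pos_iff.2 (mul_pos hp (by linarith)))

lemma p2_pos {θ₀ : ℝ} {s : ℝ} (hs : s ≠ 0) : 0 < p2 θ₀ s :=
  div_pos (mul_pos (Real.cosh_pos _) (Real.cosh_pos _)) (den_pos hs)

lemma p2_nonneg (θ₀ s : ℝ) : 0 ≤ p2 θ₀ s := by
  rcases eq_or_ne s 0 with h | h
  · subst h; unfold p2; simp
  · exact (p2_pos h).le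

lemma p1_meas (θ₀ : ℝ) : Measurable (p1 θ₀) := by
  unfold p1
  apply Measurable.ite (MeasurableSet.singleton 0) measurable_const
  apply Measurable.div
  · exact (Real.measurable_sinh.comp (measurable_id.mul_const _)).mul
      (Real.measurable_sinh.comp (measurable_id.mul_const _))
  · exact measurable_id.mul (Real.measurable_sinh.comp (measurable_id.mul_const _))

lemma p2_meas (θ₀ : ℝ) : Measurable (p2 θ₀) := by
  unfold p2
  apply Measurable.div
  · exact (Real.measurable_cosh.comp (measurable_id.mul_const _)).mul
      (Real.measurable_cosh.comp (measurable_id.mul_const _))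
  · exact measurable_id.mul (Real.measurable_sinh.comp (measurable_id.mul_const _))

/-- Integrability of `p·‖f‖²` from `MemLp`. -/
lemma g_integrable {p : ℝ → ℝ} (hp_meas : Measurable p) (hp_nn : ∀ s, 0 ≤ p s)
    {f : ℝ → ℂ}
    (hf : MemLp f 2 ((volume : Measure ℝ).withDensity fun s => ENNReal.ofReal (p s))) :
    Integrable (fun s => p s * ‖f s‖ ^ 2) (volume : Measure ℝ) := by
  have h2 : Integrable (fun s => ‖f s‖ ^ (2:ℝ))
      ((volume : Measure ℝ).withDensity fun s => ENNReal.ofReal (p s)) :=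
    hf.integrable_norm_rpow (by norm_num) (by norm_num)
  rw [integrable_withDensity_iff (hp_meas.ennreal_ofReal)
    (.of_forall fun x => ENNReal.ofReal_lt_top)] at h2
  have : (fun s => ‖f s‖ ^ (2:ℝ) * (ENNReal.ofReal (p s)).toReal)
      = fun s => p s * ‖f s‖ ^ 2 := by
    funext s
    rw [ENNReal.toReal_ofReal (hp_nn s)]
    rw [← Real.rpow_natCast ‖f s‖ 2]
    push_cast
    ring
  rwa [this] at h2

lemma eta_meas (θ₀ : ℝ) : Measurable (eta θ₀) := by
  unfold eta
  apply Measurable.ite (MeasurableSet.singleton 0) measurable_const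
  apply Measurable.div
  · exact Real.measurable_sinh.comp (measurable_id.mul_const _)
  · exact (Real.measurable_sinh.comp (measurable_id.mul_const _)).const_mul 2

/-- Conversion of a set integral of a nonnegative function to a `withDensity` measure. -/
lemma setint {g : ℝ → ℝ} (hg_nn : ∀ s, 0 ≤ g s) (hg : Integrable g (volume : Measure ℝ))
    {A : Set ℝ} (hA : MeasurableSet A) :
    ∫ s in A, g s = (((volume : Measure ℝ).withDensity
      fun s => ENNReal.ofReal (g s)) A).toReal := by
  rw [withDensity_apply _ hA]
  rw [integral_eq_lintegral_of_nonneg_ae (ae_of_all _ hg_nn) hg.aestronglyMeasurable.restrict]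

/-- The Tonelli computation. -/
lemma TON {θ₀ : ℝ} (h0 : 0 < θ₀) (h1 : θ₀ < π / 2) {σ : ℝ → ℝ}
    (hσ : ∀ t : ℝ, 0 < t → t ≤ 1 / 2 - θ₀ / π → 0 ≤ σ t ∧ eta θ₀ (σ t) = t)
    {g : ℝ → ℝ} (hgm : Measurable g) :
    ∫⁻ u in Ioo 0 (1 / 2 - θ₀ / π),
        ((volume : Measure ℝ).withDensity fun s => ENNReal.ofReal (g s))
          (Ioc (-(σ u)) (σ u))
      = ∫⁻ s, ENNReal.ofReal (g s) * ENNReal.ofReal (eta θ₀ s) := by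
  set b := 1 / 2 - θ₀ / π with hb
  set E : Set (ℝ × ℝ) :=
    {p | (0 ≤ p.2 ∧ p.1 ≤ eta θ₀ p.2) ∨ (p.2 < 0 ∧ p.1 < eta θ₀ (-p.2))} with hE
  have hEm : MeasurableSet E := by
    apply MeasurableSet.union
    · exact (measurableSet_le measurable_const measurable_snd).inter
        (measurableSet_le measurable_fst ((eta_meas θ₀).comp measurable_snd))
    · exact (measurableSet_lt measurable_snd measurable_const).inter
        (measurableSet_lt measurable_fst ((eta_meas θ₀).comp (measurable_snd.neg)))
  have key : ∀ u ∈ Ioo 0 b, ((volume : Measure ℝ).withDensity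
      fun s => ENNReal.ofReal (g s)) (Ioc (-(σ u)) (σ u))
      = ∫⁻ s, ENNReal.ofReal (g s) * E.indicator 1 (u, s) := by
    intro u hu
    rw [withDensity_apply _ measurableSet_Ioc, ← lintegral_indicator measurableSet_Ioc]
    congr 1
    funext s
    have hset := set_identity h0 h1 hσ hu.1 hu.2
    by_cases hs : s ∈ Ioc (-(σ u)) (σ u)
    · have hmem : (u, s) ∈ E := by rw [hE]; rw [hset] at hs; exact hs
      rw [indicator_of_mem hs, indicator_of_mem hmem]
      simp
    · have hmem : (u, s) ∉ E := by rw [hE]; rw [hset] at hs; exact hs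
      rw [indicator_of_notMem hs, indicator_of_notMem hmem]
      simp
  rw [setLIntegral_congr_fun measurableSet_Ioo key]
  have hswap := lintegral_lintegral_swap (μ := (volume : Measure ℝ).restrict (Ioo 0 b))
    (ν := (volume : Measure ℝ))
    (f := fun u s => ENNReal.ofReal (g s) * E.indicator 1 (u, s)) ?_
  · rw [hswap]
    congr 1
    funext s
    have hmul : ∀ u : ℝ, ENNReal.ofReal (g s) * E.indicator 1 (u, s)
        = ENNReal.ofReal (g s) * ({u : ℝ | (u, s) ∈ E}.indicator 1 u) := by
      intro u
      congr 1
    simp_rw [hmul]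
    rw [lintegral_const_mul]
    swap
    · apply Measurable.indicator measurable_one
      exact measurable_prodMk_right hEm
    have hvol : ∫⁻ u in Ioo 0 b, ({u : ℝ | (u, s) ∈ E}.indicator 1 u) = ENNReal.ofReal (eta θ₀ s) := by
      rcases le_or_gt 0 s with hs | hs
      · have hU : {u : ℝ | (u, s) ∈ E} = Iic (eta θ₀ s) := by
          ext u
          simp only [hE, mem_setOf_eq, mem_Iic]
          constructor
          · rintro (⟨_, h⟩ | ⟨h, _⟩)
            · exact h
            · linarith
          · intro h; exact Or.inl ⟨hs, h⟩
        rw [hU, lintegral_indicator_one measurableSet_Iic, Measure.restrict_apply measurableSet_Iic]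
        have hpos := eta_pos h0 h1 s
        have hleb := eta_le_b h0 h1 s
        rcases eq_or_lt_of_le hleb with he | he
        · have : Iic (eta θ₀ s) ∩ Ioo 0 b = Ioo 0 b := by
            apply inter_eq_self_of_subset_right
            intro u hu
            rw [mem_Iic, he]
            exact hu.2.le
          rw [this, Real.volume_Ioo, he]
          rw [hb]
          norm_num
        · have : Iic (eta θ₀ s) ∩ Ioo 0 b = Ioc 0 (eta θ₀ s) := by
            ext u
            simp only [mem_inter_iff, mem_Iic, mem_Ioo, mem_Ioc]
            constructor
            · rintro ⟨h1', h2', _⟩; exact ⟨h2', h1'⟩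
            · rintro ⟨h1', h2'⟩; exact ⟨h2', h1', by rw [hb]; linarith⟩
          rw [this, Real.volume_Ioc]
          simp
      · have hU : {u : ℝ | (u, s) ∈ E} = Iio (eta θ₀ (-s)) := by
          ext u
          simp only [hE, mem_setOf_eq, mem_Iio]
          constructor
          · rintro (⟨h, _⟩ | ⟨_, h⟩)
            · linarith
            · exact h
          · intro h; exact Or.inr ⟨hs, h⟩
        rw [hU, lintegral_indicator_one measurableSet_Iio, Measure.restrict_apply measurableSet_Iio]
        have hpos := eta_pos h0 h1 (-s)
        have hleb := eta_le_b h0 h1 (-s)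
        have : Iio (eta θ₀ (-s)) ∩ Ioo 0 b = Ioo 0 (eta θ₀ (-s)) := by
          ext u
          simp only [mem_inter_iff, mem_Iio, mem_Ioo]
          constructor
          · rintro ⟨h1', h2', _⟩; exact ⟨h2', h1'⟩
          · rintro ⟨h1', h2'⟩; exact ⟨h2', h1', by rw [hb]; linarith⟩
        rw [this, Real.volume_Ioo]
        rw [eta_even] at *
        simp
    rw [hvol]
  · apply Measurable.aemeasurable
    have : (Function.uncurry fun u s => ENNReal.ofReal (g s) * E.indicator 1 (u, s))
        = fun p : ℝ × ℝ => ENNReal.ofReal (g p.2) * E.indicator 1 p := by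
      funext p
      cases p
      rfl
    rw [this]
    exact ((hgm.comp measurable_snd).ennreal_ofReal).mul (measurable_one.indicator hEm)

set_option maxHeartbeats 2000000 in
/-- spectral resolution of `𝕂*`: for `f = (f₁,f₂) ∈ W*`, the function
`F(t) = ⟨f, E_{min(max(t,−b),b)} f⟩_{W*}` is real-valued, nondecreasing and right-continuous,
vanishes on `(−∞,−b]` and equals `‖f‖²_{W*}` on `[b,∞)`; and its Lebesgue–Stieltjes measure
`μ_F` satisfies `∫ t dμ_F(t) = ⟨f, 𝕂* f⟩_{W*} = (1/2)∫ η (p₁|f₁|² − p₂|f₂|²)` and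
`μ_F(ℝ) = ‖f‖²_{W*} = (1/2)∫ (p₁|f₁|² + p₂|f₂|²)`.
Here `σ : (0,b] → [0,∞)` is the inverse of `η|_{[0,∞)}`, `b = 1/2 − θ₀/π`, and `F` is
written out explicitly from the definition of the spectral family `E_t`. -/
theorem statement13 (θ₀ : ℝ) (h0 : 0 < θ₀) (h1 : θ₀ < π / 2) (σ : ℝ → ℝ)
    (hσ : ∀ t : ℝ, 0 < t → t ≤ 1 / 2 - θ₀ / π → 0 ≤ σ t ∧ eta θ₀ (σ t) = t)
    (f₁ f₂ : ℝ → ℂ)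
    (hf₁ : MemLp f₁ 2 (mu1 θ₀)) (hf₂ : MemLp f₂ 2 (mu2 θ₀))
    (F : ℝ → ℝ)
    (hF : ∀ t : ℝ, F t =
      if t < -(1 / 2 - θ₀ / π) then 0
      else if t < 0 then
        (1 / 2) * ∫ s in Set.Ioc (-(σ (-t))) (σ (-t)), p2 θ₀ s * ‖f₂ s‖ ^ 2
      else if t = 0 then (1 / 2) * ∫ s, p2 θ₀ s * ‖f₂ s‖ ^ 2
      else if t ≤ 1 / 2 - θ₀ / π then
        (1 / 2) * (∫ s, p2 θ₀ s * ‖f₂ s‖ ^ 2)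
          + (1 / 2) * ∫ s in (Set.Ioc (-(σ t)) (σ t))ᶜ, p1 θ₀ s * ‖f₁ s‖ ^ 2
      else (1 / 2) * (∫ s, p1 θ₀ s * ‖f₁ s‖ ^ 2) + (1 / 2) * ∫ s, p2 θ₀ s * ‖f₂ s‖ ^ 2) :
    Monotone F ∧
    (∀ t : ℝ, ContinuousWithinAt F (Set.Ici t) t) ∧
    (∀ t : ℝ, t ≤ -(1 / 2 - θ₀ / π) → F t = 0) ∧
    (∀ t : ℝ, 1 / 2 - θ₀ / π ≤ t →
      F t = (1 / 2) * (∫ s, p1 θ₀ s * ‖f₁ s‖ ^ 2) + (1 / 2) * ∫ s, p2 θ₀ s * ‖f₂ s‖ ^ 2) ∧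
    (∀ S : StieltjesFunction ℝ, (∀ t, S t = F t) →
      (∫ t, t ∂S.measure)
          = (1 / 2) * ∫ s, eta θ₀ s * (p1 θ₀ s * ‖f₁ s‖ ^ 2 - p2 θ₀ s * ‖f₂ s‖ ^ 2) ∧
      S.measure Set.univ
          = ENNReal.ofReal
              ((1 / 2) * (∫ s, p1 θ₀ s * ‖f₁ s‖ ^ 2)
                + (1 / 2) * ∫ s, p2 θ₀ s * ‖f₂ s‖ ^ 2)) := by
  have hbpos : 0 < 1 / 2 - θ₀ / π := b_pos h1
  have hg1_nn : ∀ s, 0 ≤ p1 θ₀ s * ‖f₁ s‖ ^ 2 :=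
    fun s => mul_nonneg (p1_pos h0 h1 s).le (by positivity)
  have hg2_nn : ∀ s, 0 ≤ p2 θ₀ s * ‖f₂ s‖ ^ 2 :=
    fun s => mul_nonneg (p2_nonneg θ₀ s) (by positivity)
  have hg1_int : Integrable (fun s => p1 θ₀ s * ‖f₁ s‖ ^ 2) volume :=
    g_integrable (p1_meas θ₀) (fun s => (p1_pos h0 h1 s).le) hf₁
  have hg2_int : Integrable (fun s => p2 θ₀ s * ‖f₂ s‖ ^ 2) volume :=
    g_integrable (p2_meas θ₀) (p2_nonneg θ₀) hf₂
  set ν₁ : Measure ℝ :=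
    (volume : Measure ℝ).withDensity (fun s => ENNReal.ofReal (p1 θ₀ s * ‖f₁ s‖ ^ 2)) with hν₁
  set ν₂ : Measure ℝ :=
    (volume : Measure ℝ).withDensity (fun s => ENNReal.ofReal (p2 θ₀ s * ‖f₂ s‖ ^ 2)) with hν₂
  have hν₁_univ : ν₁ univ < ⊤ := by
    rw [hν₁, withDensity_apply _ MeasurableSet.univ, Measure.restrict_univ]
    exact hg1_int.lintegral_lt_top
  have hν₂_univ : ν₂ univ < ⊤ := by
    rw [hν₂, withDensity_apply _ MeasurableSet.univ, Measure.restrict_univ]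
    exact hg2_int.lintegral_lt_top
  have hν₁_ne : ∀ A : Set ℝ, ν₁ A ≠ ⊤ :=
    fun A => ((measure_mono (subset_univ A)).trans_lt hν₁_univ).ne
  have hν₂_ne : ∀ A : Set ℝ, ν₂ A ≠ ⊤ :=
    fun A => ((measure_mono (subset_univ A)).trans_lt hν₂_univ).ne
  have hset1 : ∀ A : Set ℝ, MeasurableSet A →
      ∫ s in A, p1 θ₀ s * ‖f₁ s‖ ^ 2 = (ν₁ A).toReal :=
    fun A hA => setint hg1_nn hg1_int hA
  have hset2 : ∀ A : Set ℝ, MeasurableSet A →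
      ∫ s in A, p2 θ₀ s * ‖f₂ s‖ ^ 2 = (ν₂ A).toReal :=
    fun A hA => setint hg2_nn hg2_int hA
  have huniv1 : ∫ s, p1 θ₀ s * ‖f₁ s‖ ^ 2 = (ν₁ univ).toReal := by
    rw [← setIntegral_univ]; exact hset1 univ MeasurableSet.univ
  have huniv2 : ∫ s, p2 θ₀ s * ‖f₂ s‖ ^ 2 = (ν₂ univ).toReal := by
    rw [← setIntegral_univ]; exact hset2 univ MeasurableSet.univ
  -- branch formulas
  have hF1 : ∀ t, t < -(1 / 2 - θ₀ / π) → F t = 0 := by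
    intro t ht; rw [hF t, if_pos ht]
  have hF2 : ∀ t, -(1 / 2 - θ₀ / π) ≤ t → t < 0 →
      F t = 1 / 2 * (ν₂ (Ioc (-(σ (-t))) (σ (-t)))).toReal := by
    intro t h1t h2t
    rw [hF t, if_neg (not_lt.2 h1t), if_pos h2t, hset2 _ measurableSet_Ioc]
  have hF3 : F 0 = 1 / 2 * (ν₂ univ).toReal := by
    rw [hF 0, if_neg (by push_neg; linarith), if_neg (lt_irrefl 0), if_pos rfl, huniv2]
  have hF4 : ∀ t, 0 < t → t ≤ 1 / 2 - θ₀ / π →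
      F t = 1 / 2 * (ν₂ univ).toReal + 1 / 2 * (ν₁ ((Ioc (-(σ t)) (σ t))ᶜ)).toReal := by
    intro t h1t h2t
    rw [hF t, if_neg (by push_neg; linarith), if_neg (not_lt.2 h1t.le),
      if_neg (ne_of_gt h1t), if_pos h2t, huniv2, hset1 _ measurableSet_Ioc.compl]
  have hF5 : ∀ t, 1 / 2 - θ₀ / π < t →
      F t = 1 / 2 * (ν₁ univ).toReal + 1 / 2 * (ν₂ univ).toReal := by
    intro t ht
    rw [hF t, if_neg (by push_neg; linarith), if_neg (by push_neg; linarith),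
      if_neg (ne_of_gt (show t > 0 by linarith)), if_neg (not_le.2 ht), huniv1, huniv2]
  have hFb : F (1 / 2 - θ₀ / π)
      = 1 / 2 * (ν₁ univ).toReal + 1 / 2 * (ν₂ univ).toReal := by
    rw [hF4 _ hbpos le_rfl, sigma_b' h0 h1 hσ, neg_zero, Set.Ioc_self, Set.compl_empty]
    ring
  have hFtop : ∀ t, 1 / 2 - θ₀ / π ≤ t →
      F t = 1 / 2 * (ν₁ univ).toReal + 1 / 2 * (ν₂ univ).toReal := by
    intro t ht
    rcases eq_or_lt_of_le ht with h | h
    · rw [← h]; exact hFb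
    · exact hF5 t h
  have hFzero : ∀ t, t ≤ -(1 / 2 - θ₀ / π) → F t = 0 := by
    intro t ht
    rcases eq_or_lt_of_le ht with h | h
    · subst h
      rw [hF2 _ le_rfl (by linarith), neg_neg, sigma_b' h0 h1 hσ, neg_zero, Set.Ioc_self]
      simp
    · exact hF1 t h
  -- nonnegativity and bounds
  have hF_nonneg : ∀ t, 0 ≤ F t := by
    intro t
    rcases lt_trichotomy t 0 with ht | ht | ht
    · rcases lt_or_ge t (-(1 / 2 - θ₀ / π)) with h | h
      · rw [hF1 t h]
      · rw [hF2 t h ht]; positivity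
    · subst ht; rw [hF3]; positivity
    · rcases le_or_gt t (1 / 2 - θ₀ / π) with h | h
      · rw [hF4 t ht h]; positivity
      · rw [hF5 t h]; positivity
  have hF_le_halfB : ∀ t, t ≤ 0 → F t ≤ 1 / 2 * (ν₂ univ).toReal := by
    intro t ht
    rcases eq_or_lt_of_le ht with h | h
    · subst h; rw [hF3]
    · rcases lt_or_ge t (-(1 / 2 - θ₀ / π)) with h' | h'
      · rw [hF1 t h']; positivity
      · rw [hF2 t h' h]
        have := ENNReal.toReal_mono (hν₂_ne univ) (measure_mono (subset_univ
          (Ioc (-(σ (-t))) (σ (-t)))))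
        linarith
  have hF_le_T : ∀ t, F t ≤ 1 / 2 * (ν₁ univ).toReal + 1 / 2 * (ν₂ univ).toReal := by
    intro t
    rcases le_or_gt t 0 with ht | ht
    · have := hF_le_halfB t ht
      have h2 : 0 ≤ (ν₁ univ).toReal := ENNReal.toReal_nonneg
      linarith
    · rcases le_or_gt t (1 / 2 - θ₀ / π) with h | h
      · rw [hF4 t ht h]
        have := ENNReal.toReal_mono (hν₁_ne univ) (measure_mono (subset_univ
          ((Ioc (-(σ t)) (σ t))ᶜ)))
        linarith
      · rw [hF5 t h]
  have hmono : Monotone F := by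
    intro x y hxy
    rcases lt_trichotomy y 0 with hy | hy | hy
    · rcases lt_or_ge y (-(1 / 2 - θ₀ / π)) with h | h
      · rw [hF1 x (by linarith), hF1 y h]
      · rcases lt_or_ge x (-(1 / 2 - θ₀ / π)) with h' | h'
        · rw [hF1 x h']; exact hF_nonneg y
        · rw [hF2 x h' (by linarith), hF2 y h hy]
          have hsub : Ioc (-(σ (-x))) (σ (-x)) ⊆ Ioc (-(σ (-y))) (σ (-y)) := by
            have hss : σ (-x) ≤ σ (-y) :=
              sigma_anti' h0 h1 hσ (by linarith) (by linarith) (by linarith)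
            exact Ioc_subset_Ioc (by linarith) hss
          have := ENNReal.toReal_mono (hν₂_ne _) (measure_mono hsub)
          linarith
    · subst hy
      rw [hF3]; exact hF_le_halfB x hxy
    · rcases le_or_gt y (1 / 2 - θ₀ / π) with h | h
      · rcases le_or_gt x 0 with hx | hx
        · rw [hF4 y hy h]
          have := hF_le_halfB x hx
          have h2 : 0 ≤ (ν₁ ((Ioc (-(σ y)) (σ y))ᶜ)).toReal := ENNReal.toReal_nonneg
          linarith
        · rw [hF4 x hx (by linarith), hF4 y hy h]
          have hss : σ y ≤ σ x := sigma_anti' h0 h1 hσ hx hxy h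
          have hsub : (Ioc (-(σ x)) (σ x))ᶜ ⊆ (Ioc (-(σ y)) (σ y))ᶜ :=
            compl_subset_compl.2 (Ioc_subset_Ioc (by linarith) hss)
          have := ENNReal.toReal_mono (hν₁_ne _) (measure_mono hsub)
          linarith
      · rw [hF5 y h]; exact hF_le_T x
  -- singletons are null
  have hν₁sing : ∀ x : ℝ, ν₁ {x} = 0 :=
    fun x => (withDensity_absolutelyContinuous _ _) Real.volume_singleton
  have hν₂sing : ∀ x : ℝ, ν₂ {x} = 0 :=
    fun x => (withDensity_absolutelyContinuous _ _) Real.volume_singleton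
  have hRC : ∀ t : ℝ, ∀ ε : ℝ, 0 < ε → ∃ y, t < y ∧ F y ≤ F t + ε := by
    intro t ε hε
    rcases lt_trichotomy t 0 with ht | ht | ht
    · rcases lt_or_ge t (-(1 / 2 - θ₀ / π)) with h | h
      · refine ⟨(t + -(1 / 2 - θ₀ / π)) / 2, by linarith, ?_⟩
        rw [hF1 _ (by linarith), hF1 t h]; linarith
      · -- -b ≤ t < 0
        have hc₀_nn : 0 ≤ σ (-t) := (hσ (-t) (by linarith) (by linarith)).1
        have hc₀_eta : eta θ₀ (σ (-t)) = -t := (hσ (-t) (by linarith) (by linarith)).2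
        have hanti : Antitone (fun n : ℕ =>
            Ioc (-(σ (-t) + 1 / (n + 1))) (σ (-t) + 1 / (n + 1))) := by
          intro m n hmn
          have hc : ((m : ℝ) + 1) ≤ (n : ℝ) + 1 := by exact_mod_cast Nat.succ_le_succ hmn
          have : (1 : ℝ) / (n + 1) ≤ 1 / (m + 1) :=
            one_div_le_one_div_of_le (by positivity) hc
          exact Ioc_subset_Ioc (by linarith) (by linarith)
        have hiInter : (⋂ n : ℕ, Ioc (-(σ (-t) + 1 / (n + 1))) (σ (-t) + 1 / (n + 1)))
            = Icc (-(σ (-t))) (σ (-t)) := by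
          ext x
          simp only [mem_iInter, mem_Ioc, mem_Icc]
          constructor
          · intro hx
            constructor
            · by_contra hlt
              push_neg at hlt
              obtain ⟨n, hn⟩ := exists_nat_one_div_lt (show 0 < -(σ (-t)) - x by linarith)
              have := (hx n).1
              push_cast at hn ⊢
              linarith
            · by_contra hlt
              push_neg at hlt
              obtain ⟨n, hn⟩ := exists_nat_one_div_lt (show 0 < x - σ (-t) by linarith)
              have := (hx n).2
              push_cast at hn ⊢
              linarith
          · intro hx n
            have hp : (0:ℝ) < 1 / (n + 1) := by positivity
            exact ⟨by linarith [hx.1], by linarith [hx.2]⟩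
        have htend := tendsto_measure_iInter_atTop (μ := ν₂)
          (fun n => measurableSet_Ioc.nullMeasurableSet) hanti ⟨0, hν₂_ne _⟩
        rw [hiInter] at htend
        have hIcc : ν₂ (Icc (-(σ (-t))) (σ (-t))) = ν₂ (Ioc (-(σ (-t))) (σ (-t))) := by
          apply le_antisymm
          · calc ν₂ (Icc (-(σ (-t))) (σ (-t)))
                = ν₂ (insert (-(σ (-t))) (Ioc (-(σ (-t))) (σ (-t)))) := by
                  rw [Ioc_insert_left (by linarith)]
              _ ≤ ν₂ {-(σ (-t))} + ν₂ (Ioc (-(σ (-t))) (σ (-t))) := by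
                  rw [insert_eq]; exact measure_union_le _ _
              _ = ν₂ (Ioc (-(σ (-t))) (σ (-t))) := by rw [hν₂sing, zero_add]
          · exact measure_mono Ioc_subset_Icc_self
        rw [hIcc] at htend
        have htoReal := (ENNReal.tendsto_toReal (hν₂_ne _)).comp htend
        have hev := htoReal.eventually_lt_const
          (show (ν₂ (Ioc (-(σ (-t))) (σ (-t)))).toReal
            < (ν₂ (Ioc (-(σ (-t))) (σ (-t)))).toReal + 2 * ε by linarith)
        obtain ⟨n, hn⟩ := hev.exists
        simp only [Function.comp_apply] at hn
        have hone : (0:ℝ) < 1 / ((n:ℝ) + 1) := by positivity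
        have hcn_nn : (0:ℝ) ≤ σ (-t) + 1 / (n + 1) := by linarith
        refine ⟨-(eta θ₀ (σ (-t) + 1 / (n + 1))), ?_, ?_⟩
        · have hlt : eta θ₀ (σ (-t) + 1 / (n + 1)) < eta θ₀ (σ (-t)) :=
            (eta_lt_iff h0 h1 hcn_nn hc₀_nn).2 (by linarith)
          rw [hc₀_eta] at hlt; linarith
        · have hy_neg : -(eta θ₀ (σ (-t) + 1 / (n + 1))) < 0 := by
            linarith [eta_pos h0 h1 (σ (-t) + 1 / (n + 1))]
          have hy_ge : -(1 / 2 - θ₀ / π) ≤ -(eta θ₀ (σ (-t) + 1 / (n + 1))) := by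
            linarith [eta_le_b h0 h1 (σ (-t) + 1 / (n + 1))]
          rw [hF2 _ hy_ge hy_neg, neg_neg, sigma_eta' h0 h1 hσ hcn_nn, hF2 t h ht]
          linarith
    · -- t = 0
      subst ht
      have hanti : Antitone (fun n : ℕ => (Ioc (-((n:ℝ) + 1)) ((n:ℝ) + 1))ᶜ) := by
        intro m n hmn
        have hc : ((m : ℝ) + 1) ≤ (n : ℝ) + 1 := by exact_mod_cast Nat.succ_le_succ hmn
        exact compl_subset_compl.2 (Ioc_subset_Ioc (by linarith) hc)
      have hiInter : (⋂ n : ℕ, (Ioc (-((n:ℝ) + 1)) ((n:ℝ) + 1))ᶜ) = (∅ : Set ℝ) := by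
        ext x
        simp only [mem_iInter, mem_compl_iff, mem_Ioc, mem_empty_iff_false, iff_false, not_forall,
          not_not, not_and, not_le, Classical.not_imp, not_lt]
        obtain ⟨n, hn⟩ := exists_nat_ge |x|
        have h' := abs_le.1 hn
        exact ⟨n, by linarith [h'.1], by linarith [h'.2]⟩
      have htend := tendsto_measure_iInter_atTop (μ := ν₁)
        (fun n => measurableSet_Ioc.compl.nullMeasurableSet) hanti ⟨0, hν₁_ne _⟩
      rw [hiInter, measure_empty] at htend
      have htoReal := (ENNReal.tendsto_toReal (by simp)).comp htend
      rw [ENNReal.toReal_zero] at htoReal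
      have hev := htoReal.eventually_lt_const (show (0:ℝ) < 2 * ε by linarith)
      obtain ⟨n, hn⟩ := hev.exists
      simp only [Function.comp_apply] at hn
      have hcn_nn : (0:ℝ) ≤ (n:ℝ) + 1 := by positivity
      refine ⟨eta θ₀ ((n:ℝ) + 1), eta_pos h0 h1 _, ?_⟩
      rw [hF4 _ (eta_pos h0 h1 _) (eta_le_b h0 h1 _), sigma_eta' h0 h1 hσ hcn_nn, hF3]
      linarith
    · -- t > 0
      rcases lt_or_ge t (1 / 2 - θ₀ / π) with h | h
      · have hc₀_pos : 0 < σ t := sigma_pos' h0 h1 hσ ht h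
        have hc₀_eta : eta θ₀ (σ t) = t := (hσ t ht h.le).2
        have hc₀_nn : 0 ≤ σ t := hc₀_pos.le
        have hanti : Antitone (fun n : ℕ =>
            (Ioc (-(σ t - σ t / (n + 1))) (σ t - σ t / (n + 1)))ᶜ) := by
          intro m n hmn
          have hc : ((m : ℝ) + 1) ≤ (n : ℝ) + 1 := by exact_mod_cast Nat.succ_le_succ hmn
          have : σ t / ((n:ℝ) + 1) ≤ σ t / ((m:ℝ) + 1) :=
            div_le_div_of_nonneg_left hc₀_pos.le (by positivity) hc
          exact compl_subset_compl.2 (Ioc_subset_Ioc (by linarith) (by linarith))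
        have hiInter : (⋂ n : ℕ, (Ioc (-(σ t - σ t / (n + 1))) (σ t - σ t / (n + 1)))ᶜ)
            = (Ioo (-(σ t)) (σ t))ᶜ := by
          ext x
          constructor
          · intro hx
            rw [mem_iInter] at hx
            simp only [mem_compl_iff, mem_Ioo]
            rintro ⟨hx1, hx2⟩
            have hm1 : 0 < σ t - x := by linarith
            have hm2 : 0 < x + σ t := by linarith
            obtain ⟨n, hn⟩ := exists_nat_one_div_lt
              (show 0 < min (σ t - x) (x + σ t) / σ t by positivity)
            have hd : σ t / ((n:ℝ) + 1) < min (σ t - x) (x + σ t) := by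
              have h2 := mul_lt_mul_of_pos_left hn hc₀_pos
              rw [mul_one_div, mul_div_cancel₀ _ (ne_of_gt hc₀_pos)] at h2
              exact h2
            have hcontra := hx n
            rw [mem_compl_iff, mem_Ioc] at hcontra
            exact hcontra ⟨by linarith [min_le_right (σ t - x) (x + σ t)],
              by linarith [min_le_left (σ t - x) (x + σ t)]⟩
          · intro hx
            rw [mem_compl_iff, mem_Ioo] at hx
            push_neg at hx
            rw [mem_iInter]
            intro n
            rw [mem_compl_iff, mem_Ioc]
            rintro ⟨ha, hb⟩
            have hdiv : 0 < σ t / ((n:ℝ) + 1) := by positivity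
            have := hx (by linarith)
            linarith
        have htend := tendsto_measure_iInter_atTop (μ := ν₁)
          (fun n => measurableSet_Ioc.compl.nullMeasurableSet) hanti ⟨0, hν₁_ne _⟩
        rw [hiInter] at htend
        have hIoo : ν₁ ((Ioo (-(σ t)) (σ t))ᶜ) = ν₁ ((Ioc (-(σ t)) (σ t))ᶜ) := by
          apply le_antisymm
          · calc ν₁ ((Ioo (-(σ t)) (σ t))ᶜ)
                ≤ ν₁ ((Ioc (-(σ t)) (σ t))ᶜ ∪ {σ t}) := by
                  apply measure_mono
                  intro x hx
                  rw [mem_compl_iff, mem_Ioo] at hx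
                  rcases eq_or_ne x (σ t) with hxe | hxe
                  · exact Or.inr (by simp [hxe])
                  · left
                    rw [mem_compl_iff, mem_Ioc]
                    rintro ⟨ha, hb⟩
                    exact hx ⟨ha, lt_of_le_of_ne hb hxe⟩
              _ ≤ ν₁ ((Ioc (-(σ t)) (σ t))ᶜ) + ν₁ {σ t} := measure_union_le _ _
              _ = ν₁ ((Ioc (-(σ t)) (σ t))ᶜ) := by rw [hν₁sing, add_zero]
          · exact measure_mono (compl_subset_compl.2 Ioo_subset_Ioc_self)
        rw [hIoo] at htend
        have htoReal := (ENNReal.tendsto_toReal (hν₁_ne _)).comp htend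
        have hev := htoReal.eventually_lt_const
          (show (ν₁ ((Ioc (-(σ t)) (σ t))ᶜ)).toReal
            < (ν₁ ((Ioc (-(σ t)) (σ t))ᶜ)).toReal + 2 * ε by linarith)
        obtain ⟨n, hn⟩ := hev.exists
        simp only [Function.comp_apply] at hn
        have hdiv : 0 < σ t / ((n:ℝ) + 1) := by positivity
        have hdle : σ t / ((n:ℝ) + 1) ≤ σ t := by
          apply div_le_self hc₀_pos.le
          have : (0:ℝ) ≤ (n:ℝ) := Nat.cast_nonneg n
          linarith
        have hcn_nn : (0:ℝ) ≤ σ t - σ t / (n + 1) := by linarith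
        refine ⟨eta θ₀ (σ t - σ t / (n + 1)), ?_, ?_⟩
        · have hlt : eta θ₀ (σ t) < eta θ₀ (σ t - σ t / (n + 1)) :=
            (eta_lt_iff h0 h1 hc₀_nn hcn_nn).2 (by linarith)
          rw [hc₀_eta] at hlt; exact hlt
        · rw [hF4 _ (eta_pos h0 h1 _) (eta_le_b h0 h1 _), sigma_eta' h0 h1 hσ hcn_nn,
            hF4 t ht h.le]
          linarith
      · exact ⟨t + 1, by linarith, by rw [hFtop (t + 1) (by linarith), hFtop t h]; linarith⟩
  refine ⟨hmono, ?_, hFzero, ?_, ?_⟩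
  · -- right continuity
    intro t
    rw [← Set.Ioi_insert, continuousWithinAt_insert_self]
    have htend := hmono.tendsto_nhdsGT t
    have hbdd : BddBelow (F '' Ioi t) := by
      refine ⟨F t, ?_⟩
      rintro z ⟨x, hx, rfl⟩
      exact hmono (le_of_lt hx)
    have hinf : sInf (F '' Ioi t) = F t := by
      apply le_antisymm
      · by_contra hlt
        push_neg at hlt
        obtain ⟨y, hy, hFy⟩ := hRC t ((sInf (F '' Ioi t) - F t) / 2) (by linarith)
        have := csInf_le hbdd (mem_image_of_mem F hy)
        linarith
      · apply le_csInf ⟨F (t + 1), mem_image_of_mem F (by simp)⟩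
        rintro z ⟨x, hx, rfl⟩
        exact hmono (le_of_lt hx)
    unfold ContinuousWithinAt
    rw [← hinf]
    exact htend
  · -- conjunct 4
    intro t ht
    rw [hFtop t ht, huniv1, huniv2]
  · -- Stieltjes part
    intro S hS
    -- limits at ±∞
    have h_bot : Tendsto (fun t => S t) atBot (𝓝 0) := by
      apply Tendsto.congr' _ (tendsto_const_nhds (x := (0:ℝ)))
      filter_upwards [eventually_lt_atBot (-(1 / 2 - θ₀ / π))] with t ht
      rw [hS t, hF1 t ht]
    have h_top : Tendsto (fun t => S t) atTop
        (𝓝 (1 / 2 * (ν₁ univ).toReal + 1 / 2 * (ν₂ univ).toReal)) := by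
      apply Tendsto.congr' _ (tendsto_const_nhds
        (x := 1 / 2 * (ν₁ univ).toReal + 1 / 2 * (ν₂ univ).toReal))
      filter_upwards [eventually_gt_atTop (1 / 2 - θ₀ / π)] with t ht
      rw [hS t, hF5 t ht]
    have h_fin : IsFiniteMeasure S.measure := S.isFiniteMeasure h_bot h_top
    have hμuniv : S.measure univ
        = ENNReal.ofReal (1 / 2 * (ν₁ univ).toReal + 1 / 2 * (ν₂ univ).toReal) := by
      rw [S.measure_univ h_bot h_top, sub_zero]
    have hμIic : ∀ x : ℝ, S.measure (Iic x) = ENNReal.ofReal (F x) := by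
      intro x
      rw [S.measure_Iic h_bot, hS x, sub_zero]
    have hμIoi : ∀ x : ℝ, S.measure (Ioi x)
        = ENNReal.ofReal (1 / 2 * (ν₁ univ).toReal + 1 / 2 * (ν₂ univ).toReal - F x) := by
      intro x
      have hc := measure_compl (μ := S.measure) (s := Iic x) measurableSet_Iic (measure_ne_top _ _)
      rw [compl_Iic] at hc
      rw [hc, hμIic, hμuniv, ← ENNReal.ofReal_sub _ (hF_nonneg x)]
    -- integrability of the identity
    have hnull : S.measure (Iio (-(1 / 2 - θ₀ / π)) ∪ Ioi (1 / 2 - θ₀ / π)) = 0 := by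
      apply le_antisymm _ (by simp)
      calc S.measure (Iio (-(1 / 2 - θ₀ / π)) ∪ Ioi (1 / 2 - θ₀ / π))
          ≤ S.measure (Iio (-(1 / 2 - θ₀ / π))) + S.measure (Ioi (1 / 2 - θ₀ / π)) :=
            measure_union_le _ _
        _ ≤ S.measure (Iic (-(1 / 2 - θ₀ / π))) + S.measure (Ioi (1 / 2 - θ₀ / π)) := by
            gcongr
            exact Iio_subset_Iic_self
        _ = 0 := by
            rw [hμIic, hμIoi, hFzero _ le_rfl, hFb]
            simp
    have hbnd : ∀ᵐ t ∂S.measure, t ∈ Icc (-(1 / 2 - θ₀ / π)) (1 / 2 - θ₀ / π) := by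
      rw [ae_iff]
      convert hnull using 2
      ext x
      simp only [mem_setOf_eq, mem_Icc, mem_union, mem_Iio, mem_Ioi, not_and_or, not_le]
    have h_int_id : Integrable (fun t => t) S.measure := by
      apply Integrable.mono' (integrable_const (1 / 2 - θ₀ / π)) aestronglyMeasurable_id
      filter_upwards [hbnd] with t ht
      rw [Real.norm_eq_abs, abs_le]
      exact ⟨ht.1, ht.2⟩
    -- measurable versions of the densities
    obtain ⟨g₁', hg₁'m, hg₁'e⟩ :
        ∃ g', Measurable g' ∧ (fun s => p1 θ₀ s * ‖f₁ s‖ ^ 2) =ᵐ[volume] g' :=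
      ⟨hg1_int.aestronglyMeasurable.mk _,
        hg1_int.aestronglyMeasurable.stronglyMeasurable_mk.measurable,
        hg1_int.aestronglyMeasurable.ae_eq_mk⟩
    obtain ⟨g₂', hg₂'m, hg₂'e⟩ :
        ∃ g', Measurable g' ∧ (fun s => p2 θ₀ s * ‖f₂ s‖ ^ 2) =ᵐ[volume] g' :=
      ⟨hg2_int.aestronglyMeasurable.mk _,
        hg2_int.aestronglyMeasurable.stronglyMeasurable_mk.measurable,
        hg2_int.aestronglyMeasurable.ae_eq_mk⟩
    have hν₁' : ν₁ = (volume : Measure ℝ).withDensity (fun s => ENNReal.ofReal (g₁' s)) := by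
      rw [hν₁]
      exact withDensity_congr_ae (hg₁'e.fun_comp ENNReal.ofReal)
    have hν₂' : ν₂ = (volume : Measure ℝ).withDensity (fun s => ENNReal.ofReal (g₂' s)) := by
      rw [hν₂]
      exact withDensity_congr_ae (hg₂'e.fun_comp ENNReal.ofReal)
    -- positive part
    have hP : ∫⁻ t, ENNReal.ofReal t ∂S.measure
        = ENNReal.ofReal (1 / 2)
          * ∫⁻ s, ENNReal.ofReal (g₁' s) * ENNReal.ofReal (eta θ₀ s) := by
      have h1' : ∫⁻ t, ENNReal.ofReal t ∂S.measure
          = ∫⁻ t, ENNReal.ofReal (max t 0) ∂S.measure := by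
        apply lintegral_congr
        intro t
        rcases le_total t 0 with h | h
        · rw [max_eq_right h, ENNReal.ofReal_of_nonpos h, ENNReal.ofReal_zero]
        · rw [max_eq_left h]
      rw [h1', lintegral_eq_lintegral_meas_lt _ (ae_of_all _ fun t => le_max_right t 0)
        (measurable_id.max measurable_const).aemeasurable]
      have h2' : ∀ u ∈ Ioi (0:ℝ), S.measure {a : ℝ | u < max a 0}
          = ENNReal.ofReal (1 / 2 * (ν₁ univ).toReal + 1 / 2 * (ν₂ univ).toReal - F u) := by
        intro u hu
        rw [mem_Ioi] at hu
        have hset : {a : ℝ | u < max a 0} = Ioi u := by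
          ext a
          simp only [mem_setOf_eq, mem_Ioi, lt_max_iff]
          constructor
          · rintro (h | h)
            · exact h
            · linarith
          · exact fun h => Or.inl h
        rw [hset, hμIoi]
      rw [setLIntegral_congr_fun measurableSet_Ioi h2']
      rw [← Ioo_union_Ici_eq_Ioi hbpos, lintegral_union measurableSet_Ici
        (Set.disjoint_left.2 fun a ha hb => absurd hb (not_le.2 ha.2))]
      have h3' : ∫⁻ u in Ici (1 / 2 - θ₀ / π),
          ENNReal.ofReal (1 / 2 * (ν₁ univ).toReal + 1 / 2 * (ν₂ univ).toReal - F u) = 0 := by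
        rw [setLIntegral_congr_fun measurableSet_Ici (fun u hu => ?_),
          lintegral_zero]
        rw [hFtop u hu, sub_self, ENNReal.ofReal_zero]
      rw [h3', add_zero]
      have h4' : ∀ u ∈ Ioo 0 (1 / 2 - θ₀ / π),
          ENNReal.ofReal (1 / 2 * (ν₁ univ).toReal + 1 / 2 * (ν₂ univ).toReal - F u)
            = ENNReal.ofReal (1 / 2) * ν₁ (Ioc (-(σ u)) (σ u)) := by
        intro u hu
        rw [hF4 u hu.1 hu.2.le]
        have hsplit : ν₁ (Ioc (-(σ u)) (σ u)) + ν₁ ((Ioc (-(σ u)) (σ u))ᶜ) = ν₁ univ :=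
          measure_add_measure_compl measurableSet_Ioc
        have htR := congrArg ENNReal.toReal hsplit
        rw [ENNReal.toReal_add (hν₁_ne _) (hν₁_ne _)] at htR
        have h5' : 1 / 2 * (ν₁ univ).toReal + 1 / 2 * (ν₂ univ).toReal
            - (1 / 2 * (ν₂ univ).toReal + 1 / 2 * (ν₁ ((Ioc (-(σ u)) (σ u))ᶜ)).toReal)
            = 1 / 2 * (ν₁ (Ioc (-(σ u)) (σ u))).toReal := by linarith
        rw [h5', ENNReal.ofReal_mul (by norm_num), ENNReal.ofReal_toReal (hν₁_ne _)]
      rw [setLIntegral_congr_fun measurableSet_Ioo h4',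
        lintegral_const_mul' _ _ ENNReal.ofReal_ne_top]
      congr 1
      rw [hν₁']
      exact TON h0 h1 hσ hg₁'m
    -- negative part
    have hN : ∫⁻ t, ENNReal.ofReal (-t) ∂S.measure
        = ENNReal.ofReal (1 / 2)
          * ∫⁻ s, ENNReal.ofReal (g₂' s) * ENNReal.ofReal (eta θ₀ s) := by
      have h1' : ∫⁻ t, ENNReal.ofReal (-t) ∂S.measure
          = ∫⁻ t, ENNReal.ofReal (max (-t) 0) ∂S.measure := by
        apply lintegral_congr
        intro t
        rcases le_total (-t) 0 with h | h
        · rw [max_eq_right h, ENNReal.ofReal_of_nonpos h, ENNReal.ofReal_zero]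
        · rw [max_eq_left h]
      rw [h1', lintegral_eq_lintegral_meas_le _ (ae_of_all _ fun t => le_max_right (-t) 0)
        (measurable_neg.max measurable_const).aemeasurable]
      have h2' : ∀ u ∈ Ioi (0:ℝ), S.measure {a : ℝ | u ≤ max (-a) 0}
          = ENNReal.ofReal (F (-u)) := by
        intro u hu
        rw [mem_Ioi] at hu
        have hset : {a : ℝ | u ≤ max (-a) 0} = Iic (-u) := by
          ext a
          simp only [mem_setOf_eq, mem_Iic, le_max_iff]
          constructor
          · rintro (h | h)
            · linarith
            · linarith
          · intro h
            exact Or.inl (by linarith)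
        rw [hset, hμIic]
      rw [setLIntegral_congr_fun measurableSet_Ioi h2']
      rw [← Ioo_union_Ici_eq_Ioi hbpos, lintegral_union measurableSet_Ici
        (Set.disjoint_left.2 fun a ha hb => absurd hb (not_le.2 ha.2))]
      have h3' : ∫⁻ u in Ici (1 / 2 - θ₀ / π), ENNReal.ofReal (F (-u)) = 0 := by
        rw [setLIntegral_congr_fun measurableSet_Ici (fun u hu => ?_),
          lintegral_zero]
        rw [hFzero (-u) (by simp only [neg_le_neg_iff]; exact hu), ENNReal.ofReal_zero]
      rw [h3', add_zero]
      have h4' : ∀ u ∈ Ioo 0 (1 / 2 - θ₀ / π),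
          ENNReal.ofReal (F (-u)) = ENNReal.ofReal (1 / 2) * ν₂ (Ioc (-(σ u)) (σ u)) := by
        intro u hu
        rw [hF2 (-u) (by linarith [hu.2]) (by linarith [hu.1]), neg_neg,
          ENNReal.ofReal_mul (by norm_num), ENNReal.ofReal_toReal (hν₂_ne _)]
      rw [setLIntegral_congr_fun measurableSet_Ioo h4',
        lintegral_const_mul' _ _ ENNReal.ofReal_ne_top]
      congr 1
      rw [hν₂']
      exact TON h0 h1 hσ hg₂'m
    constructor
    · -- the integral identity
      rw [integral_eq_lintegral_pos_part_sub_lintegral_neg_part h_int_id, hP, hN,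
        ENNReal.toReal_mul, ENNReal.toReal_mul, ENNReal.toReal_ofReal (by norm_num)]
      have hL1 : (∫⁻ s, ENNReal.ofReal (g₁' s) * ENNReal.ofReal (eta θ₀ s)).toReal
          = ∫ s, eta θ₀ s * (p1 θ₀ s * ‖f₁ s‖ ^ 2) := by
        have he1 : (fun s => ENNReal.ofReal (g₁' s) * ENNReal.ofReal (eta θ₀ s))
            =ᵐ[volume] fun s =>
              ENNReal.ofReal (eta θ₀ s * (p1 θ₀ s * ‖f₁ s‖ ^ 2)) := by
          filter_upwards [hg₁'e] with s hs
          rw [← hs, ← ENNReal.ofReal_mul (hg1_nn s), mul_comm]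
        rw [lintegral_congr_ae he1]
        rw [integral_eq_lintegral_of_nonneg_ae
          (ae_of_all _ fun s => mul_nonneg (eta_pos h0 h1 s).le (hg1_nn s))
          (((eta_meas θ₀).aestronglyMeasurable).mul hg1_int.aestronglyMeasurable)]
      have hL2 : (∫⁻ s, ENNReal.ofReal (g₂' s) * ENNReal.ofReal (eta θ₀ s)).toReal
          = ∫ s, eta θ₀ s * (p2 θ₀ s * ‖f₂ s‖ ^ 2) := by
        have he2 : (fun s => ENNReal.ofReal (g₂' s) * ENNReal.ofReal (eta θ₀ s))
            =ᵐ[volume] fun s =>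
              ENNReal.ofReal (eta θ₀ s * (p2 θ₀ s * ‖f₂ s‖ ^ 2)) := by
          filter_upwards [hg₂'e] with s hs
          rw [← hs, ← ENNReal.ofReal_mul (hg2_nn s), mul_comm]
        rw [lintegral_congr_ae he2]
        rw [integral_eq_lintegral_of_nonneg_ae
          (ae_of_all _ fun s => mul_nonneg (eta_pos h0 h1 s).le (hg2_nn s))
          (((eta_meas θ₀).aestronglyMeasurable).mul hg2_int.aestronglyMeasurable)]
      rw [hL1, hL2]
      have hint1 : Integrable (fun s => eta θ₀ s * (p1 θ₀ s * ‖f₁ s‖ ^ 2)) volume := by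
        apply Integrable.mono' (hg1_int.const_mul (1 / 2))
          (((eta_meas θ₀).aestronglyMeasurable).mul hg1_int.aestronglyMeasurable)
        filter_upwards with s
        simp only [Pi.mul_apply]
        rw [Real.norm_of_nonneg (mul_nonneg (eta_pos h0 h1 s).le (hg1_nn s))]
        apply mul_le_mul_of_nonneg_right _ (hg1_nn s)
        have := eta_le_b h0 h1 s
        have h2 : 0 ≤ θ₀ / π := by positivity
        linarith
      have hint2 : Integrable (fun s => eta θ₀ s * (p2 θ₀ s * ‖f₂ s‖ ^ 2)) volume := by
        apply Integrable.mono' (hg2_int.const_mul (1 / 2))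
          (((eta_meas θ₀).aestronglyMeasurable).mul hg2_int.aestronglyMeasurable)
        filter_upwards with s
        simp only [Pi.mul_apply]
        rw [Real.norm_of_nonneg (mul_nonneg (eta_pos h0 h1 s).le (hg2_nn s))]
        apply mul_le_mul_of_nonneg_right _ (hg2_nn s)
        have := eta_le_b h0 h1 s
        have h2 : 0 ≤ θ₀ / π := by positivity
        linarith
      have hsubint : ∫ s, eta θ₀ s * (p1 θ₀ s * ‖f₁ s‖ ^ 2 - p2 θ₀ s * ‖f₂ s‖ ^ 2)
          = (∫ s, eta θ₀ s * (p1 θ₀ s * ‖f₁ s‖ ^ 2))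
            - ∫ s, eta θ₀ s * (p2 θ₀ s * ‖f₂ s‖ ^ 2) := by
        rw [← integral_sub hint1 hint2]
        congr 1
        funext s
        ring
      rw [hsubint]
      ring
    · -- total mass
      rw [hμuniv, huniv1, huniv2]
end
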